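/- arXiv:2208.12549 — 2 statements merged into one kernel-verified Lean document; each statement's English description precedes it below -/
import Mathlib

section
/- Let X be a reflexive Banach space and E : X → ℝ Fréchet differentiable with locally Lipschitz derivative and X-elliptic. Then E is bounded below and coercive, i.e. E(x) → +∞ as ‖x‖ → ∞. -/
open Filter Topology Bornology

theorem stmt_2
{X : Type*} [NormedAddCommGroup X] [NormedSpace ℝ X] [CompleteSpace X]
    (hrefl : Function.Surjective (NormedSpace.inclusionInDoubleDual ℝ X))
    (E : X → ℝ) (E' : X → X →L[ℝ] ℝ)
    (hdiff : ∀ x, HasFDerivAt E (E' x) x)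
    (hlip : LocallyLipschitz E')
    (α s : ℝ) (hα : 0 < α) (hs1 : 1 < s) (hs2 : s ≤ 2)
    (hell : ∀ x y : X, α * ‖x - y‖ ^ s ≤ (E' x - E' y) (x - y)) :
    (∃ m : ℝ, ∀ x : X, m ≤ E x) ∧
      Tendsto E (Filter.comap (fun x : X => ‖x‖) Filter.atTop) Filter.atTop := by
  have hs0 : (0:ℝ) < s := lt_trans one_pos hs1
  have hsne : s ≠ 0 := hs0.ne'
  set c : ℝ := α / s with hc
  have hcpos : 0 < c := div_pos hα hs0
  set C : ℝ := ‖E' 0‖ with hC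
  have hCnn : 0 ≤ C := norm_nonneg _
  -- main lower bound
  have key : ∀ x : X, E 0 - C * ‖x‖ + c * ‖x‖ ^ s ≤ E x := by
    intro x
    set h : ℝ → ℝ := fun t => E (t • x) - t * (E' 0 x) - c * t ^ s * ‖x‖ ^ s with hh
    have Hderiv : ∀ t : ℝ,
        HasDerivAt h (E' (t • x) x - E' 0 x - c * (s * t ^ (s - 1)) * ‖x‖ ^ s) t := by
      intro t
      have h1 : HasDerivAt (fun t : ℝ => t • x) x t := by
        simpa using (hasDerivAt_id t).smul_const x
      have H1 : HasDerivAt (fun t : ℝ => E (t • x)) (E' (t • x) x) t :=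
        (hdiff (t • x)).comp_hasDerivAt t h1
      have H2 : HasDerivAt (fun t : ℝ => t * (E' 0 x)) (E' 0 x) t := by
        simpa using (hasDerivAt_id t).mul_const (E' 0 x)
      have H3 : HasDerivAt (fun t : ℝ => c * t ^ s * ‖x‖ ^ s)
          (c * (s * t ^ (s - 1)) * ‖x‖ ^ s) t :=
        ((Real.hasDerivAt_rpow_const (Or.inr hs1.le)).const_mul c).mul_const _
      exact (H1.sub H2).sub H3
    have hmono : MonotoneOn h (Set.Icc 0 1) := by
      apply monotoneOn_of_deriv_nonneg (convex_Icc 0 1)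
      · exact fun t _ => ((Hderiv t).differentiableAt.continuousAt).continuousWithinAt
      · exact fun t _ => (Hderiv t).differentiableAt.differentiableWithinAt
      · intro t ht
        rw [interior_Icc] at ht
        rw [(Hderiv t).deriv]
        have htpos : 0 < t := ht.1
        have hE := hell (t • x) 0
        have e1 : ‖t • x - 0‖ = t * ‖x‖ := by
          rw [sub_zero, norm_smul, Real.norm_eq_abs, abs_of_pos htpos]
        have e2 : (E' (t • x) - E' 0) (t • x - 0) = t * (E' (t • x) x - E' 0 x) := by
          rw [sub_zero]
          simp [ContinuousLinearMap.sub_apply, map_smul, smul_eq_mul, mul_sub]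
        rw [e1, e2, Real.mul_rpow htpos.le (norm_nonneg x)] at hE
        have hts : t ^ s = t * t ^ (s - 1) := by
          nth_rewrite 1 [show s = 1 + (s - 1) by ring]
          rw [Real.rpow_add htpos, Real.rpow_one]
        have hD : α * (t ^ (s - 1) * ‖x‖ ^ s) ≤ E' (t • x) x - E' 0 x := by
          have h2 : t * (α * (t ^ (s - 1) * ‖x‖ ^ s)) ≤ t * (E' (t • x) x - E' 0 x) := by
            have heq : t * (α * (t ^ (s - 1) * ‖x‖ ^ s)) = α * (t ^ s * ‖x‖ ^ s) := by
              rw [hts]; ring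
            linarith [hE, heq.le, heq.ge]
          exact le_of_mul_le_mul_left h2 htpos
        have hcsα : c * s = α := div_mul_cancel₀ α hsne
        have heq2 : c * (s * t ^ (s - 1)) * ‖x‖ ^ s = α * (t ^ (s - 1) * ‖x‖ ^ s) := by
          rw [← hcsα]; ring
        linarith
    have hmle := hmono (Set.left_mem_Icc.2 zero_le_one) (Set.right_mem_Icc.2 zero_le_one)
      zero_le_one
    have h0 : h 0 = E 0 := by
      simp [hh, Real.zero_rpow hsne]
    have h1 : h 1 = E x - E' 0 x - c * ‖x‖ ^ s := by
      simp [hh, Real.one_rpow]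
    rw [h0, h1] at hmle
    have hop : |E' 0 x| ≤ C * ‖x‖ := (E' 0).le_opNorm x |>.trans_eq' (by
      rw [Real.norm_eq_abs])
    have := abs_le.1 hop
    linarith
  -- rewrite the lower bound
  have key2 : ∀ x : X, E 0 + ‖x‖ * (c * ‖x‖ ^ (s - 1) - C) ≤ E x := by
    intro x
    have hr : ‖x‖ ^ s = ‖x‖ * ‖x‖ ^ (s - 1) := by
      have : ‖x‖ ^ (1 + (s - 1)) = ‖x‖ ^ (1:ℝ) * ‖x‖ ^ (s - 1) :=
        Real.rpow_add' (norm_nonneg x) (by simpa using hsne)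
      simpa [Real.rpow_one] using this
    have := key x
    nlinarith [this, hr]
  -- coercive auxiliary function
  have hgrow : Tendsto (fun r : ℝ => r * (c * r ^ (s - 1) - C)) atTop atTop := by
    have h1 : Tendsto (fun r : ℝ => c * r ^ (s - 1)) atTop atTop :=
      (tendsto_rpow_atTop (by linarith : (0:ℝ) < s - 1)).const_mul_atTop hcpos
    have h2 : Tendsto (fun r : ℝ => c * r ^ (s - 1) - C) atTop atTop := by
      simpa [sub_eq_add_neg] using tendsto_atTop_add_const_right atTop (-C) h1
    exact tendsto_id.atTop_mul_atTop₀ h2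
  constructor
  · obtain ⟨R, hR⟩ := (hgrow.eventually_ge_atTop 0).exists_forall_of_atTop
    refine ⟨E 0 - C * max R 0, fun x => ?_⟩
    have hx := key2 x
    rcases le_or_gt R ‖x‖ with hcase | hcase
    · have h0 : 0 ≤ ‖x‖ * (c * ‖x‖ ^ (s - 1) - C) := hR _ hcase
      nlinarith [mul_nonneg hCnn (le_max_right R (0:ℝ))]
    · have hxR : ‖x‖ ≤ max R 0 := le_max_iff.2 (Or.inl hcase.le)
      have hnn : 0 ≤ c * ‖x‖ ^ (s - 1) :=
        mul_nonneg hcpos.le (Real.rpow_nonneg (norm_nonneg x) _)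
      nlinarith [norm_nonneg x]
  · have hcomp : Tendsto (fun x : X => E 0 + ‖x‖ * (c * ‖x‖ ^ (s - 1) - C))
        (Filter.comap (fun x : X => ‖x‖) Filter.atTop) Filter.atTop :=
      tendsto_atTop_add_const_left _ (E 0) (hgrow.comp tendsto_comap)
    exact tendsto_atTop_mono key2 hcomp
end

section
/- Let X be a reflexive Banach space, D a universal dictionary of X (a weakly closed cone with span D dense in X), and E : X → ℝ Fréchet differentiable with locally Lipschitz derivative and X-elliptic. If u* ∈ X satisfies 0 ∈ argmin_{v ∈ D} E(u* + v), then u* is the unique global minimizer of E on X. -/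
open Filter Topology Bornology MeasureTheory

theorem stmt_12
{X : Type*} [NormedAddCommGroup X] [NormedSpace ℝ X] [CompleteSpace X]
    (hrefl : Function.Surjective (NormedSpace.inclusionInDoubleDual ℝ X))
    (E : X → ℝ) (E' : X → X →L[ℝ] ℝ)
    (hdiff : ∀ x, HasFDerivAt E (E' x) x)
    (hlip : LocallyLipschitz E')
    (α s : ℝ) (hα : 0 < α) (hs1 : 1 < s) (hs2 : s ≤ 2)
    (hell : ∀ x y : X, α * ‖x - y‖ ^ s ≤ (E' x - E' y) (x - y))
(D : Set X)
    (hcone : ∀ x ∈ D, ∀ l : ℝ, l • x ∈ D)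
    (hweak : ∀ (u : ℕ → X) (x : X), (∀ m, u m ∈ D) →
      (∀ φ : X →L[ℝ] ℝ, Tendsto (fun m => φ (u m)) atTop (𝓝 (φ x))) → x ∈ D)
    (hdense : Dense (Submodule.span ℝ D : Set X))
    (u : X) (hu : ∀ z ∈ D, E u ≤ E (u + z)) :
    (∀ y : X, E u ≤ E y) ∧ ∀ v : X, (∀ y : X, E v ≤ E y) → v = u := by
  -- Step 1: E' u vanishes on D
  have hD0 : ∀ z ∈ D, E' u z = 0 := by
    intro z hz
    have hline : ∀ t : ℝ, HasDerivAt (fun t : ℝ => E (u + t • z)) (E' (u + t • z) z) t := by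
      intro t
      have h1 : HasDerivAt (fun t : ℝ => u + t • z) z t := by
        simpa using ((hasDerivAt_id t).smul_const z).const_add u
      exact (hdiff (u + t • z)).comp_hasDerivAt t h1
    have hmin : IsLocalMin (fun t : ℝ => E (u + t • z)) 0 := by
      apply Filter.Eventually.of_forall
      intro t
      simpa using hu (t • z) (hcone z hz t)
    have := hmin.hasDerivAt_eq_zero (by simpa using hline 0)
    simpa using this
  -- Step 2: E' u = 0 on span D, hence everywhere by density
  have hE'u : ∀ z : X, E' u z = 0 := by
    have hspan : ∀ z ∈ (Submodule.span ℝ D : Set X), E' u z = 0 := by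
      intro z hz
      have : (Submodule.span ℝ D : Submodule ℝ X) ≤ LinearMap.ker (E' u : X →ₗ[ℝ] ℝ) := by
        rw [Submodule.span_le]
        intro x hx
        simpa using hD0 x hx
      exact this hz
    have heq : (fun z : X => E' u z) = fun _ => (0 : ℝ) :=
      Continuous.ext_on hdense (E' u).continuous continuous_const hspan
    intro z; exact congrFun heq z
  -- Step 3: monotonicity along segments gives global minimality
  have hmin : ∀ y : X, E u ≤ E y := by
    intro y
    set w := y - u with hw
    have hg : ∀ t : ℝ, HasDerivAt (fun t : ℝ => E (u + t • w)) (E' (u + t • w) w) t := by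
      intro t
      have h1 : HasDerivAt (fun t : ℝ => u + t • w) w t := by
        simpa using ((hasDerivAt_id t).smul_const w).const_add u
      exact (hdiff (u + t • w)).comp_hasDerivAt t h1
    have hmono : MonotoneOn (fun t : ℝ => E (u + t • w)) (Set.Icc (0:ℝ) 1) := by
      apply monotoneOn_of_deriv_nonneg (convex_Icc 0 1)
      · have hEcont : Continuous E :=
          continuous_iff_continuousAt.mpr fun x => (hdiff x).continuousAt
        exact (hEcont.comp (by continuity)).continuousOn
      · intro t _
        exact (hg t).differentiableAt.differentiableWithinAt
      · intro t ht
        rw [interior_Icc] at ht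
        rw [(hg t).deriv]
        have h := hell (u + t • w) u
        have hsimp : u + t • w - u = t • w := by abel
        rw [hsimp] at h
        have h0 : (0:ℝ) ≤ α * ‖t • w‖ ^ s := by
          apply mul_nonneg hα.le
          exact Real.rpow_nonneg (norm_nonneg _) s
        have h1 : (0:ℝ) ≤ (E' (u + t • w) - E' u) (t • w) := le_trans h0 h
        have h2 : (E' (u + t • w) - E' u) (t • w) = t * E' (u + t • w) w := by
          simp [hE'u, ContinuousLinearMap.map_smul, smul_eq_mul, mul_comm]
        rw [h2] at h1
        exact nonneg_of_mul_nonneg_right (by linarith [h1]) ht.1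
    have h01 := hmono (Set.mem_Icc.mpr ⟨le_refl 0, zero_le_one⟩)
      (Set.mem_Icc.mpr ⟨zero_le_one, le_refl 1⟩) zero_le_one
    simpa [hw] using h01
  refine ⟨hmin, ?_⟩
  intro v hv
  have hE'v : E' v = 0 := by
    have : IsLocalMin E v := Filter.Eventually.of_forall hv
    exact this.hasFDerivAt_eq_zero (hdiff v)
  by_contra hne
  have hnorm : 0 < ‖u - v‖ := by
    rw [norm_pos_iff, sub_ne_zero]
    exact fun h => hne h.symm
  have h := hell u v
  have heq : (E' u - E' v) (u - v) = 0 := by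
    simp [hE'v, hE'u]
  rw [heq] at h
  have : 0 < α * ‖u - v‖ ^ s :=
    mul_pos hα (Real.rpow_pos_of_pos hnorm s)
  linarith
end
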